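/- For 1 ≤ k ≤ m and 1 ≤ p < ∞, the (p,k)-th joint numerical index of ℓ∞^m equals 1/k^{1/p}. Moreover, n_{(p,k)}(ℓ∞) = 1/k^{1/p} for all k ∈ ℕ. -/

import Mathlib

open scoped ENNReal

noncomputable section
/-- The set Π_X of pairs (x, x*) with ‖x‖ = 1, ‖x*‖ = 1 and x*(x) = 1. -/
def dualPairs (𝕜 X : Type*) [RCLike 𝕜] [NormedAddCommGroup X] [NormedSpace 𝕜 X] :
    Set (X × (X →L[𝕜] 𝕜)) :=
  {q | ‖q.1‖ = 1 ∧ ‖q.2‖ = 1 ∧ q.2 q.1 = 1}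

/-- Numerical range of an operator. -/
def numRange {𝕜 X : Type*} [RCLike 𝕜] [NormedAddCommGroup X] [NormedSpace 𝕜 X]
    (T : X →L[𝕜] X) : Set 𝕜 :=
  {c | ∃ q ∈ dualPairs 𝕜 X, c = q.2 (T q.1)}

/-- Numerical radius of an operator. -/
def numRadius {𝕜 X : Type*} [RCLike 𝕜] [NormedAddCommGroup X] [NormedSpace 𝕜 X]
    (T : X →L[𝕜] X) : ℝ :=
  sSup {r | ∃ q ∈ dualPairs 𝕜 X, r = ‖q.2 (T q.1)‖}

/-- Joint numerical range of a k-tuple of operators. -/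
def jointNumRange {𝕜 X : Type*} [RCLike 𝕜] [NormedAddCommGroup X] [NormedSpace 𝕜 X]
    {k : ℕ} (T : Fin k → X →L[𝕜] X) : Set (Fin k → 𝕜) :=
  {v | ∃ q ∈ dualPairs 𝕜 X, v = fun i => q.2 (T i q.1)}

/-- The p-th joint numerical radius of a k-tuple of operators. -/
def jointNumRadius {𝕜 X : Type*} [RCLike 𝕜] [NormedAddCommGroup X] [NormedSpace 𝕜 X]
    (p : ℝ) {k : ℕ} (T : Fin k → X →L[𝕜] X) : ℝ :=
  sSup {r | ∃ q ∈ dualPairs 𝕜 X, r = (∑ i, ‖q.2 (T i q.1)‖ ^ p) ^ (1 / p)}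

/-- The p-th joint operator norm of a k-tuple of operators. -/
def jointOpNorm {𝕜 X Y : Type*} [RCLike 𝕜] [NormedAddCommGroup X] [NormedSpace 𝕜 X]
    [NormedAddCommGroup Y] [NormedSpace 𝕜 Y]
    (p : ℝ) {k : ℕ} (T : Fin k → X →L[𝕜] Y) : ℝ :=
  sSup {r | ∃ x : X, ‖x‖ = 1 ∧ r = (∑ i, ‖T i x‖ ^ p) ^ (1 / p)}

/-- The numerical index of a space. -/
def numIndex (𝕜 X : Type*) [RCLike 𝕜] [NormedAddCommGroup X] [NormedSpace 𝕜 X] : ℝ :=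
  sInf {r | ∃ T : X →L[𝕜] X, ‖T‖ = 1 ∧ r = numRadius T}

/-- The (p,k)-th joint numerical index of a space. -/
def jointNumIndex (p : ℝ) (k : ℕ) (𝕜 X : Type*) [RCLike 𝕜] [NormedAddCommGroup X]
    [NormedSpace 𝕜 X] : ℝ :=
  sInf {r | ∃ T : Fin k → X →L[𝕜] X, jointOpNorm p T = 1 ∧ r = jointNumRadius p T}


namespace Stmt16Aux


variable {𝕜 : Type*} [RCLike 𝕜]

/-- sign trick: multiply by a unimodular-ish factor to realize the norm. -/
lemma exists_sign (w : 𝕜) : ∃ f : 𝕜, ‖f‖ ≤ 1 ∧ f * w = (‖w‖ : ℝ) := by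
  rcases eq_or_ne w 0 with h | h
  · exact ⟨0, by simp [h]⟩
  · refine ⟨(‖w‖ : 𝕜)⁻¹ * (starRingEnd 𝕜) w, ?_, ?_⟩
    · rw [norm_mul, norm_inv, RCLike.norm_conj, RCLike.norm_ofReal, abs_of_nonneg (norm_nonneg w),
        inv_mul_cancel₀ (norm_ne_zero_iff.mpr h)]
    · rw [mul_assoc, RCLike.conj_mul]
      rw [← RCLike.ofReal_pow, ← RCLike.ofReal_inv, ← RCLike.ofReal_mul]
      norm_cast
      rw [pow_two, inv_mul_cancel_left₀ (norm_ne_zero_iff.mpr h)]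

/-- maximize `‖a + t*b‖` over the closed unit disc at a unimodular point. -/
lemma exists_unimodular_ge (a b s : 𝕜) (hs : ‖s‖ ≤ 1) :
    ∃ t : 𝕜, ‖t‖ = 1 ∧ ‖a + s * b‖ ≤ ‖a + t * b‖ := by
  have hineq : ‖a + s * b‖ ≤ ‖a‖ + ‖b‖ := by
    calc ‖a + s * b‖ ≤ ‖a‖ + ‖s * b‖ := norm_add_le _ _
    _ ≤ ‖a‖ + ‖b‖ := by
      rw [norm_mul]
      nlinarith [norm_nonneg b, norm_nonneg (s*b)]
  rcases eq_or_ne b 0 with hb | hb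
  · exact ⟨1, norm_one, by simpa [hb] using hineq⟩
  rcases eq_or_ne a 0 with ha | ha
  · refine ⟨(‖b‖ : 𝕜)⁻¹ * (starRingEnd 𝕜) b, ?_, ?_⟩
    · rw [norm_mul, norm_inv, RCLike.norm_conj, RCLike.norm_ofReal, abs_of_nonneg (norm_nonneg b),
        inv_mul_cancel₀ (norm_ne_zero_iff.mpr hb)]
    · have : (‖b‖ : 𝕜)⁻¹ * (starRingEnd 𝕜) b * b = (‖b‖ : ℝ) := by
        rw [mul_assoc, RCLike.conj_mul, ← RCLike.ofReal_pow, ← RCLike.ofReal_inv,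
          ← RCLike.ofReal_mul]
        norm_cast
        rw [pow_two, inv_mul_cancel_left₀ (norm_ne_zero_iff.mpr hb)]
      rw [ha, zero_add, zero_add, this, RCLike.norm_ofReal, abs_of_nonneg (norm_nonneg b),
        norm_mul]
      nlinarith [norm_nonneg b, norm_nonneg (s*b)]
  · refine ⟨(‖a‖ : 𝕜)⁻¹ * a * ((‖b‖ : 𝕜)⁻¹ * (starRingEnd 𝕜) b), ?_, ?_⟩
    · rw [norm_mul, norm_mul, norm_mul, norm_inv, norm_inv, RCLike.norm_conj,
        RCLike.norm_ofReal, RCLike.norm_ofReal, abs_of_nonneg (norm_nonneg a),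
        abs_of_nonneg (norm_nonneg b), inv_mul_cancel₀ (norm_ne_zero_iff.mpr ha),
        inv_mul_cancel₀ (norm_ne_zero_iff.mpr hb), one_mul]
    · have hbb : ((‖b‖ : 𝕜)⁻¹ * (starRingEnd 𝕜) b) * b = (‖b‖ : ℝ) := by
        rw [mul_assoc, RCLike.conj_mul, ← RCLike.ofReal_pow, ← RCLike.ofReal_inv,
          ← RCLike.ofReal_mul]
        norm_cast
        rw [pow_two, inv_mul_cancel_left₀ (norm_ne_zero_iff.mpr hb)]
      have : a + (‖a‖ : 𝕜)⁻¹ * a * ((‖b‖ : 𝕜)⁻¹ * (starRingEnd 𝕜) b) * b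
          = (1 + (‖a‖ : 𝕜)⁻¹ * (‖b‖ : ℝ)) * a := by
        rw [mul_assoc, hbb]; ring
      rw [this]
      have h2 : ‖(1 + (‖a‖ : 𝕜)⁻¹ * (‖b‖ : ℝ)) * a‖ = ‖a‖ + ‖b‖ := by
        rw [norm_mul, ← RCLike.ofReal_one, ← RCLike.ofReal_inv, ← RCLike.ofReal_mul,
          ← RCLike.ofReal_add, RCLike.norm_ofReal]
        have hna : ‖a‖ ≠ 0 := norm_ne_zero_iff.mpr ha
        rw [abs_of_nonneg (by positivity)]
        field_simp
      rw [h2]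
      exact hineq


variable {X I : Type*} [NormedAddCommGroup X] [NormedSpace 𝕜 X]

/-- A "sup basis": coordinate system witnessing that `X` behaves like an `ℓ∞` space. -/
structure SupBasis (𝕜 X : Type*) (I : Type*) [RCLike 𝕜] [NormedAddCommGroup X]
    [NormedSpace 𝕜 X] where
  e : I → X
  c : I → (X →L[𝕜] 𝕜)
  c_e_same : ∀ i, c i (e i) = 1
  c_e_ne : ∀ i j, i ≠ j → c i (e j) = 0
  c_norm_le : ∀ i, ‖c i‖ ≤ 1
  exists_coord : ∀ (z : X) (r : ℝ), r < ‖z‖ → ∃ i, r < ‖c i z‖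
  norm_le_one : ∀ y : X, (∀ j, ‖c j y‖ ≤ 1) → ‖y‖ ≤ 1

namespace SupBasis

variable (B : SupBasis 𝕜 X I)

lemma c_apply_le (i : I) (x : X) : ‖B.c i x‖ ≤ ‖x‖ := by
  calc ‖B.c i x‖ ≤ ‖B.c i‖ * ‖x‖ := (B.c i).le_opNorm x
  _ ≤ 1 * ‖x‖ := mul_le_mul_of_nonneg_right (B.c_norm_le i) (norm_nonneg x)
  _ = ‖x‖ := one_mul _

lemma e_norm (i : I) : ‖B.e i‖ = 1 := by
  refine le_antisymm (B.norm_le_one _ fun j => ?_) ?_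
  · rcases eq_or_ne j i with rfl | hji
    · rw [B.c_e_same]; simp
    · rw [B.c_e_ne j i hji]; simp
  · have := B.c_apply_le i (B.e i)
    rw [B.c_e_same i, norm_one] at this
    exact this

lemma c_norm (i : I) : ‖B.c i‖ = 1 := by
  refine le_antisymm (B.c_norm_le i) ?_
  have := (B.c i).le_opNorm (B.e i)
  rw [B.c_e_same i, norm_one, B.e_norm i, mul_one] at this
  exact this

include B in
/-- Key lemma: the numerical radius of any operator is (pointwise) as large as its norm. -/
lemma exists_pair (T : X →L[𝕜] X) {x : X} (hx : ‖x‖ ≤ 1) {r : ℝ} (hr : r < ‖T x‖) :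
    ∃ q ∈ dualPairs 𝕜 X, r < ‖q.2 (T q.1)‖ := by
  obtain ⟨i, hi⟩ := B.exists_coord (T x) r hr
  set xi := B.c i x with hxi_def
  have hxi : ‖xi‖ ≤ 1 := le_trans (B.c_apply_le i x) hx
  set b := B.c i (T (B.e i)) with hb_def
  set a := B.c i (T x) - xi * b with ha_def
  obtain ⟨t, ht1, ht2⟩ := exists_unimodular_ge a b xi hxi
  set y := x + (t - xi) • B.e i with hy_def
  have hcy : ∀ j, B.c j y = B.c j x + (t - xi) * B.c j (B.e i) := by
    intro j
    rw [hy_def, map_add, map_smul, smul_eq_mul]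
  have hciy : B.c i y = t := by rw [hcy i, B.c_e_same i]; ring
  have hy1 : ‖y‖ ≤ 1 := by
    apply B.norm_le_one
    intro j
    rcases eq_or_ne j i with rfl | hji
    · rw [hciy, ht1]
    · rw [hcy j, B.c_e_ne j i hji, mul_zero, add_zero]
      exact le_trans (B.c_apply_le j x) hx
  have hTy : B.c i (T y) = a + t * b := by
    have h1 : T y = T x + (t - xi) • T (B.e i) := by rw [hy_def]; simp
    rw [h1, map_add, map_smul, smul_eq_mul, ha_def, hb_def]; ring
  have hTx : B.c i (T x) = a + xi * b := by rw [ha_def]; ring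
  set φ := (starRingEnd 𝕜 t) • B.c i with hφ_def
  have hφy : φ y = 1 := by
    rw [hφ_def]
    simp only [ContinuousLinearMap.smul_apply, smul_eq_mul, hciy]
    rw [RCLike.conj_mul, ht1]
    norm_num
  have hφ_le : ‖φ‖ ≤ 1 := by
    rw [hφ_def]
    refine le_trans (ContinuousLinearMap.opNorm_smul_le _ _) ?_
    rw [RCLike.norm_conj, ht1, one_mul]
    exact B.c_norm_le i
  have hy_norm : ‖y‖ = 1 := by
    refine le_antisymm hy1 ?_
    have h2 := φ.le_opNorm y
    rw [hφy, norm_one] at h2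
    nlinarith [norm_nonneg y, norm_nonneg φ]
  have hφ_norm : ‖φ‖ = 1 := by
    refine le_antisymm hφ_le ?_
    have h2 := φ.le_opNorm y
    rw [hφy, norm_one, hy_norm, mul_one] at h2
    exact h2
  refine ⟨(y, φ), ⟨hy_norm, hφ_norm, hφy⟩, ?_⟩
  have h3 : ‖φ (T y)‖ = ‖B.c i (T y)‖ := by
    rw [hφ_def]
    simp only [ContinuousLinearMap.smul_apply, smul_eq_mul, norm_mul, RCLike.norm_conj, ht1,
      one_mul]
  calc r < ‖B.c i (T x)‖ := hi
  _ = ‖a + xi * b‖ := by rw [hTx]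
  _ ≤ ‖a + t * b‖ := ht2
  _ = ‖B.c i (T y)‖ := by rw [hTy]
  _ = ‖φ (T y)‖ := h3.symm

end SupBasis

/-- For `p ≥ 1`, the joint numerical radius set is bounded above. -/
lemma radius_ub {p : ℝ} (hp : 1 ≤ p) {k : ℕ} (T : Fin k → X →L[𝕜] X) :
    ∀ r ∈ {r | ∃ q ∈ dualPairs 𝕜 X, r = (∑ i, ‖q.2 (T i q.1)‖ ^ p) ^ (1 / p)},
      r ≤ (∑ i, ‖T i‖ ^ p) ^ (1 / p) := by
  rintro r ⟨q, ⟨hq1, hq2, hq3⟩, rfl⟩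
  apply Real.rpow_le_rpow (Finset.sum_nonneg fun i _ => Real.rpow_nonneg (norm_nonneg _) p)
    (Finset.sum_le_sum fun i _ => ?_) (by positivity)
  apply Real.rpow_le_rpow (norm_nonneg _) ?_ (le_trans zero_le_one hp)
  calc ‖q.2 (T i q.1)‖ ≤ ‖q.2‖ * ‖T i q.1‖ := q.2.le_opNorm _
  _ = ‖T i q.1‖ := by rw [hq2, one_mul]
  _ ≤ ‖T i‖ * ‖q.1‖ := (T i).le_opNorm _
  _ = ‖T i‖ := by rw [hq1, mul_one]

namespace SupBasis

variable {𝕜 X I : Type*} [RCLike 𝕜] [NormedAddCommGroup X] [NormedSpace 𝕜 X]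
variable (B : SupBasis 𝕜 X I)

lemma rpow_le_self' {a p : ℝ} (ha : 0 ≤ a) (ha1 : a ≤ 1) (hp : 1 ≤ p) : a ^ p ≤ a := by
  rcases eq_or_lt_of_le ha with h0 | h0
  · rw [← h0, Real.zero_rpow (by linarith : p ≠ 0)]
  · calc a ^ p ≤ a ^ (1:ℝ) := Real.rpow_le_rpow_of_exponent_ge h0 ha1 hp
    _ = a := Real.rpow_one a

include B in
lemma index_lower {p : ℝ} (hp : 1 ≤ p) {k : ℕ} (hk : 1 ≤ k)
    (T : Fin k → X →L[𝕜] X) (hT : jointOpNorm p T = 1) :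
    1 / (k : ℝ) ^ (1 / p) ≤ jointNumRadius p T := by
  have hp0 : (0:ℝ) < p := lt_of_lt_of_le one_pos hp
  have hp0' : p ≠ 0 := ne_of_gt hp0
  have hk0 : (0:ℝ) < (k:ℝ) := by exact_mod_cast hk
  set K : ℝ := (k:ℝ) ^ (1/p) with hK
  have hK0 : 0 < K := Real.rpow_pos_of_pos hk0 _
  have hR0 : 0 ≤ jointNumRadius p T := by
    apply Real.sSup_nonneg
    rintro r ⟨q, hq, rfl⟩
    positivity
  apply le_of_forall_pos_le_add
  intro ε hε
  rcases le_or_gt 1 (ε * K) with hδ1 | hδ1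
  · have h1 : 1 / K ≤ ε := by rw [div_le_iff₀ hK0]; linarith
    linarith
  · set δ := ε * K with hδ
    have hδ0 : 0 < δ := mul_pos hε hK0
    have h1δ : 0 < 1 - δ := by rw [hδ]; linarith
    have hT' : sSup {r | ∃ x : X, ‖x‖ = 1 ∧ r = (∑ i, ‖T i x‖ ^ p) ^ (1/p)} = 1 := hT
    have hSne : {r | ∃ x : X, ‖x‖ = 1 ∧ r = (∑ i, ‖T i x‖ ^ p) ^ (1/p)}.Nonempty := by
      by_contra h
      rw [Set.not_nonempty_iff_eq_empty] at h
      rw [h, Real.sSup_empty] at hT'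
      norm_num at hT'
    have hlt : 1 - δ < sSup {r | ∃ x : X, ‖x‖ = 1 ∧ r = (∑ i, ‖T i x‖ ^ p) ^ (1/p)} := by
      rw [hT']; linarith
    obtain ⟨s, ⟨x, hx1, rfl⟩, hs⟩ := exists_lt_of_lt_csSup hSne hlt
    have hsum : (1 - δ) ^ p < ∑ i, ‖T i x‖ ^ p := by
      have h2 := Real.rpow_lt_rpow (le_of_lt h1δ) hs hp0
      rwa [one_div, Real.rpow_inv_rpow
        (Finset.sum_nonneg fun i _ => Real.rpow_nonneg (norm_nonneg _) p) hp0'] at h2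
    have hex : ∃ i : Fin k, (1 - δ) ^ p / k < ‖T i x‖ ^ p := by
      by_contra h
      push_neg at h
      have h3 : ∑ i, ‖T i x‖ ^ p ≤ ∑ _i : Fin k, (1 - δ) ^ p / k :=
        Finset.sum_le_sum fun i _ => h i
      rw [Finset.sum_const, Finset.card_univ, Fintype.card_fin, nsmul_eq_mul,
        mul_div_cancel₀ _ (ne_of_gt hk0)] at h3
      linarith
    obtain ⟨i, hi⟩ := hex
    have hTi : (1 - δ) / K < ‖T i x‖ := by
      have h4 := Real.rpow_lt_rpow (by positivity) hi (by positivity : (0:ℝ) < 1/p)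
      rwa [Real.div_rpow (Real.rpow_nonneg (le_of_lt h1δ) p) (le_of_lt hk0), one_div,
        Real.rpow_rpow_inv (le_of_lt h1δ) hp0', Real.rpow_rpow_inv (norm_nonneg _) hp0',
        ← one_div, ← hK] at h4
    obtain ⟨q, hq, hq2⟩ := B.exists_pair (T i) (le_of_eq hx1) hTi
    have hmem : (∑ j, ‖q.2 (T j q.1)‖ ^ p) ^ (1/p) ∈
        {r | ∃ q ∈ dualPairs 𝕜 X, r = (∑ j, ‖q.2 (T j q.1)‖ ^ p) ^ (1/p)} := ⟨q, hq, rfl⟩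
    have hle1 : ‖q.2 (T i q.1)‖ ≤ (∑ j, ‖q.2 (T j q.1)‖ ^ p) ^ (1/p) := by
      have h5 : ‖q.2 (T i q.1)‖ ^ p ≤ ∑ j, ‖q.2 (T j q.1)‖ ^ p :=
        Finset.single_le_sum (f := fun j => ‖q.2 (T j q.1)‖ ^ p)
          (fun j _ => Real.rpow_nonneg (norm_nonneg _) p) (Finset.mem_univ i)
      calc ‖q.2 (T i q.1)‖ = (‖q.2 (T i q.1)‖ ^ p) ^ (1/p) := by
            rw [one_div, Real.rpow_rpow_inv (norm_nonneg _) hp0']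
      _ ≤ _ := Real.rpow_le_rpow (Real.rpow_nonneg (norm_nonneg _) p) h5 (by positivity)
    have hle2 : (∑ j, ‖q.2 (T j q.1)‖ ^ p) ^ (1/p) ≤ jointNumRadius p T :=
      le_csSup ⟨(∑ j, ‖T j‖ ^ p) ^ (1/p), fun r hr => radius_ub hp T r hr⟩ hmem
    have heq : (1 - δ) / K = 1 / K - ε := by
      rw [hδ]
      field_simp
    linarith

include B in
lemma exists_witness {p : ℝ} (hp : 1 ≤ p) {k : ℕ} (hk : 1 ≤ k) (ι : Fin k → I)
    (hι : Function.Injective ι) :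
    ∃ T : Fin k → X →L[𝕜] X, jointOpNorm p T = 1 ∧
      jointNumRadius p T = 1 / (k : ℝ) ^ (1 / p) := by
  classical
  have hp0 : (0:ℝ) < p := lt_of_lt_of_le one_pos hp
  have hp0' : p ≠ 0 := ne_of_gt hp0
  have hk0 : (0:ℝ) < (k:ℝ) := by exact_mod_cast hk
  set κr : ℝ := ((k:ℝ) ^ (1/p))⁻¹ with hκr
  have hκ0 : 0 < κr := inv_pos.mpr (Real.rpow_pos_of_pos hk0 _)
  have hκp : κr ^ p = ((k:ℝ))⁻¹ := by
    rw [hκr, Real.inv_rpow (Real.rpow_nonneg hk0.le _), one_div,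
      Real.rpow_inv_rpow hk0.le hp0']
  set T : Fin k → X →L[𝕜] X :=
    fun i => ((κr : 𝕜) : 𝕜) • (B.c (ι i)).smulRight (B.e (ι i)) with hTdef
  have hTapp : ∀ (i : Fin k) (x : X), T i x = (κr : 𝕜) • (B.c (ι i) x) • B.e (ι i) := by
    intro i x
    rw [hTdef]
    simp [ContinuousLinearMap.smulRight_apply]
  have hTnorm : ∀ (i : Fin k) (x : X), ‖T i x‖ = κr * ‖B.c (ι i) x‖ := by
    intro i x
    rw [hTapp, norm_smul, norm_smul, RCLike.norm_ofReal, abs_of_pos hκ0, B.e_norm, mul_one]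
  have i₀ : Fin k := ⟨0, hk⟩
  set x₀ : X := ∑ j : Fin k, B.e (ι j) with hx₀
  have hA : ∀ j : Fin k, B.c (ι j) x₀ = 1 := by
    intro j
    rw [hx₀, map_sum, Finset.sum_eq_single j
      (fun j' _ hj' => B.c_e_ne (ι j) (ι j') fun h => hj' (hι h).symm)
      (fun h => absurd (Finset.mem_univ j) h)]
    exact B.c_e_same (ι j)
  have hB : ∀ j' : I, (∀ j : Fin k, ι j ≠ j') → B.c j' x₀ = 0 := by
    intro j' h
    rw [hx₀, map_sum, Finset.sum_eq_zero]
    intro j _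
    exact B.c_e_ne j' (ι j) fun hb => h j hb.symm
  have hx₀le : ∀ j' : I, ‖B.c j' x₀‖ ≤ 1 := by
    intro j'
    by_cases h : ∃ j : Fin k, ι j = j'
    · obtain ⟨j, rfl⟩ := h
      rw [hA j, norm_one]
    · push_neg at h
      rw [hB j' h, norm_zero]
      exact zero_le_one
  have hx₀norm : ‖x₀‖ = 1 := by
    refine le_antisymm (B.norm_le_one _ hx₀le) ?_
    have h1 := B.c_apply_le (ι i₀) x₀
    rwa [hA i₀, norm_one] at h1
  -- joint operator norm
  have hval : ∀ x : X, ‖x‖ = 1 → (∑ i, ‖T i x‖ ^ p) ≤ 1 := by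
    intro x hx
    have hterm : ∀ i : Fin k, ‖T i x‖ ^ p ≤ κr ^ p := by
      intro i
      apply Real.rpow_le_rpow (norm_nonneg _) ?_ (le_of_lt hp0)
      rw [hTnorm]
      calc κr * ‖B.c (ι i) x‖ ≤ κr * 1 := by
            apply mul_le_mul_of_nonneg_left ?_ hκ0.le
            rw [← hx]
            exact B.c_apply_le _ x
      _ = κr := mul_one _
    calc ∑ i, ‖T i x‖ ^ p ≤ ∑ _i : Fin k, κr ^ p := Finset.sum_le_sum (fun i _ => hterm i)
    _ = k * κr ^ p := by rw [Finset.sum_const, Finset.card_univ, Fintype.card_fin, nsmul_eq_mul]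
    _ = 1 := by rw [hκp, mul_inv_cancel₀ (ne_of_gt hk0)]
  have hub : ∀ r ∈ {r | ∃ x : X, ‖x‖ = 1 ∧ r = (∑ i, ‖T i x‖ ^ p) ^ (1/p)}, r ≤ 1 := by
    rintro r ⟨x, hx, rfl⟩
    have h7 : (∑ i, ‖T i x‖ ^ p) ^ (1/p) ≤ (1:ℝ) ^ (1/p) :=
      Real.rpow_le_rpow (Finset.sum_nonneg fun i _ => Real.rpow_nonneg (norm_nonneg _) p)
        (hval x hx) (by positivity)
    rw [Real.one_rpow] at h7
    exact h7
  have hmem1 : (1:ℝ) ∈ {r | ∃ x : X, ‖x‖ = 1 ∧ r = (∑ i, ‖T i x‖ ^ p) ^ (1/p)} := by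
    refine ⟨x₀, hx₀norm, ?_⟩
    have hterm : ∀ i : Fin k, ‖T i x₀‖ ^ p = κr ^ p := by
      intro i
      rw [hTnorm, hA i, norm_one, mul_one]
    rw [Finset.sum_congr rfl (fun i _ => hterm i), Finset.sum_const, Finset.card_univ,
      Fintype.card_fin, nsmul_eq_mul, hκp, mul_inv_cancel₀ (ne_of_gt hk0), Real.one_rpow]
  have hop : jointOpNorm p T = 1 :=
    le_antisymm (Real.sSup_le hub zero_le_one) (le_csSup ⟨1, hub⟩ hmem1)
  -- joint numerical radius
  have hradub : ∀ r ∈ {r | ∃ q ∈ dualPairs 𝕜 X, r = (∑ i, ‖q.2 (T i q.1)‖ ^ p) ^ (1/p)},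
      r ≤ κr := by
    rintro r ⟨q, ⟨hq1, hq2, hq3⟩, rfl⟩
    have haa1 : ∀ i : Fin k, ‖q.2 (B.e (ι i))‖ ≤ 1 := by
      intro i
      calc ‖q.2 (B.e (ι i))‖ ≤ ‖q.2‖ * ‖B.e (ι i)‖ := q.2.le_opNorm _
      _ = 1 := by rw [hq2, B.e_norm, one_mul]
    have hsum : ∑ i : Fin k, ‖q.2 (B.e (ι i))‖ ≤ 1 := by
      choose f hf1 hf2 using fun w : 𝕜 => exists_sign w
      set z : X := ∑ j : Fin k, f (q.2 (B.e (ι j))) • B.e (ι j) with hz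
      have hzA : ∀ j : Fin k, B.c (ι j) z = f (q.2 (B.e (ι j))) := by
        intro j
        rw [hz, map_sum, Finset.sum_eq_single j
          (fun j' _ hj' => by
            rw [map_smul, smul_eq_mul, B.c_e_ne (ι j) (ι j') fun h => hj' (hι h).symm, mul_zero])
          (fun h => absurd (Finset.mem_univ j) h)]
        rw [map_smul, smul_eq_mul, B.c_e_same (ι j), mul_one]
      have hzB : ∀ j' : I, (∀ j : Fin k, ι j ≠ j') → B.c j' z = 0 := by
        intro j' h
        rw [hz, map_sum, Finset.sum_eq_zero]
        intro j _
        rw [map_smul, smul_eq_mul, B.c_e_ne j' (ι j) fun hb => h j hb.symm, mul_zero]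
      have hz1 : ‖z‖ ≤ 1 := by
        apply B.norm_le_one
        intro j'
        by_cases h : ∃ j : Fin k, ι j = j'
        · obtain ⟨j, rfl⟩ := h
          rw [hzA j]
          exact hf1 _
        · push_neg at h
          rw [hzB j' h, norm_zero]
          exact zero_le_one
      have hq2z : q.2 z = ((∑ i : Fin k, ‖q.2 (B.e (ι i))‖ : ℝ) : 𝕜) := by
        rw [hz, map_sum]
        push_cast
        apply Finset.sum_congr rfl
        intro j _
        rw [map_smul, smul_eq_mul, hf2]
      have h6 : ‖q.2 z‖ ≤ 1 := by
        calc ‖q.2 z‖ ≤ ‖q.2‖ * ‖z‖ := q.2.le_opNorm _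
        _ ≤ 1 * 1 := by
            apply mul_le_mul (le_of_eq hq2) hz1 (norm_nonneg _) zero_le_one
        _ = 1 := one_mul _
      rwa [hq2z, RCLike.norm_ofReal,
        abs_of_nonneg (Finset.sum_nonneg fun i _ => norm_nonneg _)] at h6
    have hsum_p : ∑ i : Fin k, ‖q.2 (B.e (ι i))‖ ^ p ≤ 1 := by
      calc ∑ i : Fin k, ‖q.2 (B.e (ι i))‖ ^ p ≤ ∑ i : Fin k, ‖q.2 (B.e (ι i))‖ :=
        Finset.sum_le_sum (fun i _ => rpow_le_self' (norm_nonneg _) (haa1 i) hp)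
      _ ≤ 1 := hsum
    have hterm : ∀ i : Fin k, ‖q.2 (T i q.1)‖ ≤ κr * ‖q.2 (B.e (ι i))‖ := by
      intro i
      rw [hTapp, map_smul, map_smul, smul_eq_mul, smul_eq_mul, norm_mul, norm_mul,
        RCLike.norm_ofReal, abs_of_pos hκ0]
      apply mul_le_mul_of_nonneg_left ?_ hκ0.le
      calc ‖B.c (ι i) q.1‖ * ‖q.2 (B.e (ι i))‖ ≤ 1 * ‖q.2 (B.e (ι i))‖ := by
            apply mul_le_mul_of_nonneg_right ?_ (norm_nonneg _)
            rw [← hq1]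
            exact B.c_apply_le _ q.1
      _ = ‖q.2 (B.e (ι i))‖ := one_mul _
    calc (∑ i, ‖q.2 (T i q.1)‖ ^ p) ^ (1/p)
        ≤ (∑ i : Fin k, (κr * ‖q.2 (B.e (ι i))‖) ^ p) ^ (1/p) := by
          apply Real.rpow_le_rpow (Finset.sum_nonneg fun i _ =>
            Real.rpow_nonneg (norm_nonneg _) p) ?_ (by positivity)
          exact Finset.sum_le_sum fun i _ =>
            Real.rpow_le_rpow (norm_nonneg _) (hterm i) (le_of_lt hp0)
    _ = (κr ^ p * ∑ i : Fin k, ‖q.2 (B.e (ι i))‖ ^ p) ^ (1/p) := by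
          rw [Finset.mul_sum]
          congr 1
          exact Finset.sum_congr rfl fun i _ => Real.mul_rpow hκ0.le (norm_nonneg _)
    _ ≤ (κr ^ p * 1) ^ (1/p) := by
          apply Real.rpow_le_rpow ?_ ?_ (by positivity)
          · positivity
          · exact mul_le_mul_of_nonneg_left hsum_p (Real.rpow_nonneg hκ0.le p)
    _ = κr := by rw [mul_one, one_div, Real.rpow_rpow_inv hκ0.le hp0']
  have hmem2 : κr ∈ {r | ∃ q ∈ dualPairs 𝕜 X, r = (∑ i, ‖q.2 (T i q.1)‖ ^ p) ^ (1/p)} := by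
    refine ⟨(B.e (ι i₀), B.c (ι i₀)), ⟨B.e_norm _, B.c_norm _, B.c_e_same _⟩, ?_⟩
    have hterm : ∀ i : Fin k,
        ‖B.c (ι i₀) (T i (B.e (ι i₀)))‖ ^ p = if i = i₀ then κr ^ p else 0 := by
      intro i
      rcases eq_or_ne i i₀ with rfl | hne
      · rw [if_pos rfl, hTapp, B.c_e_same, one_smul, map_smul, smul_eq_mul, B.c_e_same,
          mul_one, RCLike.norm_ofReal, abs_of_pos hκ0]
      · rw [hTapp, B.c_e_ne (ι i) (ι i₀) fun h => hne (hι h)]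
        simp only [zero_smul, smul_zero, map_zero, norm_zero, if_neg hne]
        exact Real.zero_rpow hp0'
    rw [Finset.sum_congr rfl (fun i _ => hterm i), Finset.sum_ite_eq' Finset.univ i₀
      (fun _ => κr ^ p)]
    rw [if_pos (Finset.mem_univ i₀), one_div, Real.rpow_rpow_inv hκ0.le hp0']
  have hrad : jointNumRadius p T = κr :=
    le_antisymm (Real.sSup_le hradub hκ0.le) (le_csSup ⟨κr, hradub⟩ hmem2)
  exact ⟨T, hop, by rw [hrad, hκr]; exact (one_div _).symm⟩

include B in
theorem jointNumIndex_eq' {p : ℝ} (hp : 1 ≤ p) {k : ℕ} (hk : 1 ≤ k) (ι : Fin k → I)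
    (hι : Function.Injective ι) :
    jointNumIndex p k 𝕜 X = 1 / (k : ℝ) ^ (1 / p) := by
  obtain ⟨T, hT1, hT2⟩ := B.exists_witness hp hk ι hι
  refine le_antisymm ?_ ?_
  · exact csInf_le ⟨1 / (k : ℝ) ^ (1/p),
      by rintro r ⟨S, hS1, rfl⟩; exact B.index_lower hp hk S hS1⟩ ⟨T, hT1, hT2.symm⟩
  · exact le_csInf ⟨_, T, hT1, rfl⟩ (by rintro r ⟨S, hS1, rfl⟩; exact B.index_lower hp hk S hS1)

end SupBasis

/-- Coordinate functional on `PiLp ∞`. -/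
def piCoord (m : ℕ) (i : Fin m) : PiLp ∞ (fun _ : Fin m => 𝕜) →L[𝕜] 𝕜 :=
  LinearMap.mkContinuous
    { toFun := fun x => x i
      map_add' := fun _ _ => rfl
      map_smul' := fun _ _ => rfl } 1
    (fun x => by
      rw [one_mul, PiLp.norm_eq_ciSup]
      exact le_ciSup (f := fun j => ‖x j‖) (Finite.bddAbove_range _) i)

/-- The sup basis for `ℓ∞^m`. -/
def piBasis (m : ℕ) (hm : 0 < m) : SupBasis 𝕜 (PiLp ∞ (fun _ : Fin m => 𝕜)) (Fin m) where
  e i := (WithLp.equiv ∞ _).symm (Pi.single i 1)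
  c i := piCoord m i
  c_e_same i := by
    exact Pi.single_eq_same (M := fun _ : Fin m => 𝕜) i 1
  c_e_ne i j h := by
    exact Pi.single_eq_of_ne (M := fun _ : Fin m => 𝕜) h 1
  c_norm_le i := LinearMap.mkContinuous_norm_le _ zero_le_one _
  exists_coord z r hr := by
    haveI : Nonempty (Fin m) := Fin.pos_iff_nonempty.mp hm
    rw [PiLp.norm_eq_ciSup] at hr
    obtain ⟨i, hi⟩ := (lt_ciSup_iff (Finite.bddAbove_range _)).mp hr
    exact ⟨i, hi⟩
  norm_le_one y h := by
    haveI : Nonempty (Fin m) := Fin.pos_iff_nonempty.mp hm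
    rw [PiLp.norm_eq_ciSup]
    exact ciSup_le fun j => h j

/-- Coordinate functional on `ℓ∞`. -/
def lpCoord (i : ℕ) : lp (fun _ : ℕ => 𝕜) ∞ →L[𝕜] 𝕜 :=
  LinearMap.mkContinuous
    { toFun := fun x => x i
      map_add' := fun x y => congrFun (lp.coeFn_add x y) i
      map_smul' := fun a x => congrFun (lp.coeFn_smul a x) i } 1
    (fun x => by rw [one_mul]; exact lp.norm_apply_le_norm ENNReal.top_ne_zero x i)

/-- The sup basis for `ℓ∞`. -/
def lpBasis : SupBasis 𝕜 (lp (fun _ : ℕ => 𝕜) ∞) ℕ where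
  e i := lp.single ∞ i 1
  c i := lpCoord i
  c_e_same i := by simp [lpCoord, lp.single_apply_self]
  c_e_ne i j h := by simp [lpCoord, lp.single_apply_ne ∞ j 1 h, Pi.single_eq_of_ne h]
  c_norm_le i := LinearMap.mkContinuous_norm_le _ zero_le_one _
  exists_coord z r hr := by
    rw [lp.norm_eq_ciSup] at hr
    obtain ⟨i, hi⟩ := (lt_ciSup_iff (lp.memℓp z).bddAbove).mp hr
    exact ⟨i, hi⟩
  norm_le_one y h := lp.norm_le_of_forall_le zero_le_one h


end Stmt16Aux

theorem stmt16 {𝕜 : Type*} [RCLike 𝕜] {p : ℝ} (hp : 1 ≤ p) {k : ℕ} (hk : 1 ≤ k) :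
    (∀ m : ℕ, k ≤ m →
      jointNumIndex p k 𝕜 (PiLp ∞ (fun _ : Fin m => 𝕜)) = 1 / (k : ℝ) ^ (1 / p)) ∧
    jointNumIndex p k 𝕜 (lp (fun _ : ℕ => 𝕜) ∞) = 1 / (k : ℝ) ^ (1 / p) := by
  constructor
  · intro m hm
    have hm0 : 0 < m := lt_of_lt_of_le hk hm
    exact (Stmt16Aux.piBasis m hm0).jointNumIndex_eq' hp hk (Fin.castLE hm)
      (Fin.castLE_injective hm)
  · exact Stmt16Aux.lpBasis.jointNumIndex_eq' hp hk (fun i => (i : ℕ)) Fin.val_injective
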